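/- Assume in addition 2β < min(ε, δ/2). Then for each s ∈ {1, …, m}, the set T_s = θ({q ∈ Σ(P) : q_0 = p_s}) is a closed rectangle in M of diameter at most 2β. -/

import Mathlib

open Set Filter Metric Topology

variable {M : Type*} [MetricSpace M] [CompactSpace M]

/-- `f` is expansive with expansivity constant `ρ`: if two orbits stay `ρ`-close for all
integer times, the points coincide. -/
def IsExpansiveWith (f : Equiv.Perm M) (ρ : ℝ) : Prop :=
  ∀ x y : M, (∀ n : ℤ, dist ((f ^ n) x) ((f ^ n) y) ≤ ρ) → x = y

/-- The stable set `W^s(x)`. -/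
def stableSet (f : Equiv.Perm M) (x : M) : Set M :=
  {y : M | Tendsto (fun n : ℤ => dist ((f ^ n) x) ((f ^ n) y)) atTop (𝓝 0)}

/-- The unstable set `W^u(x)`. -/
def unstableSet (f : Equiv.Perm M) (x : M) : Set M :=
  {y : M | Tendsto (fun n : ℤ => dist ((f ^ n) x) ((f ^ n) y)) atBot (𝓝 0)}

/-- The `ε`-stable set `W^s_ε(x)`. -/
def epsStable (f : Equiv.Perm M) (ε : ℝ) (x : M) : Set M :=
  {y : M | ∀ n : ℤ, 0 ≤ n → dist ((f ^ n) x) ((f ^ n) y) ≤ ε}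

/-- The `ε`-unstable set `W^u_ε(x)`. -/
def epsUnstable (f : Equiv.Perm M) (ε : ℝ) (x : M) : Set M :=
  {y : M | ∀ n : ℤ, n ≤ 0 → dist ((f ^ n) x) ((f ^ n) y) ≤ ε}

/-- Shadowing property: every `δ`-pseudo-orbit is `ε`-shadowed by a true orbit. -/
def HasShadowing (f : Equiv.Perm M) : Prop :=
  ∀ ε : ℝ, 0 < ε → ∃ δ : ℝ, 0 < δ ∧ ∀ y : ℤ → M,
    (∀ n : ℤ, dist (f (y n)) (y (n + 1)) < δ) →
      ∃ z : M, ∀ n : ℤ, dist ((f ^ n) z) (y n) ≤ ε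

/-- A rectangle: a nonempty set of diameter `< δ` closed under the bracket operation. -/
def IsRectangle (δ : ℝ) (br : M → M → M) (R : Set M) : Prop :=
  R.Nonempty ∧ Metric.diam R < δ ∧ ∀ x ∈ R, ∀ y ∈ R, br x y ∈ R

/-- Stable border `∂^s R`: points of `R` that are not interior points of
`W^u(x,R) = W^u_ε(x) ∩ R` in the subspace topology of `W^u_ε(x)`. -/
def stableBorder (f : Equiv.Perm M) (ε : ℝ) (R : Set M) : Set M :=
  {x : M | x ∈ R ∧ ¬ ∃ U : Set M, IsOpen U ∧ x ∈ U ∧ U ∩ epsUnstable f ε x ⊆ R}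

/-- Unstable border `∂^u R`: points of `R` that are not interior points of
`W^s(x,R) = W^s_ε(x) ∩ R` in the subspace topology of `W^s_ε(x)`. -/
def unstableBorder (f : Equiv.Perm M) (ε : ℝ) (R : Set M) : Set M :=
  {x : M | x ∈ R ∧ ¬ ∃ U : Set M, IsOpen U ∧ x ∈ U ∧ U ∩ epsStable f ε x ⊆ R}

/-- A Markov partition: a finite family of proper rectangles covering `M`, with pairwise
disjoint interiors, satisfying the Markov inclusions for the invariant fibers. -/
def IsMarkovPartition (f : Equiv.Perm M) (ε δ : ℝ) (br : M → M → M) {m : ℕ}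
    (R : Fin m → Set M) : Prop :=
  (∀ i, IsRectangle δ br (R i)) ∧
  (∀ i, R i = closure (interior (R i))) ∧
  (⋃ i, R i) = Set.univ ∧
  (∀ i j, i ≠ j → interior (R i) ∩ interior (R j) = ∅) ∧
  ∀ i j, ∀ x ∈ interior (R i) ∩ ⇑f ⁻¹' interior (R j),
    ⇑f '' (epsStable f ε x ∩ R i) ⊆ epsStable f ε (f x) ∩ R j ∧
    epsUnstable f ε (f x) ∩ R j ⊆ ⇑f '' (epsUnstable f ε x ∩ R i)

/-- If moreover `2β < min(ε, δ/2)`, then for each `s`, the set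
`T_s = θ({q ∈ Σ(P) : q_0 = p_s})` is a closed rectangle of diameter at most `2β`. -/
theorem stmt_15 (f : Equiv.Perm M) (hf : Continuous ⇑f) (hf' : Continuous ⇑f.symm)
    (ρ ε δ : ℝ) (hρ : 0 < ρ) (hexp : IsExpansiveWith f ρ)
    (hε0 : 0 < ε) (hε : ε ≤ ρ / 4) (hδ : 0 < δ) (br : M → M → M)
    (hbr : ∀ x y : M, dist x y < δ → epsStable f ε x ∩ epsUnstable f ε y = {br x y})
    (β α γ : ℝ) (hβ0 : 0 < β) (hβ : β < ρ / 2) (hα0 : 0 < α)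
    (hshad : ∀ y : ℤ → M, (∀ n : ℤ, dist (f (y n)) (y (n + 1)) < α) →
      ∃ z : M, ∀ n : ℤ, dist ((f ^ n) z) (y n) ≤ β)
    (hγ0 : 0 < γ) (hγβ : γ < β) (hγα : γ < α / 2)
    (hγ : ∀ x y : M, dist x y < γ → dist (f x) (f y) < α / 2)
    {m : ℕ} (p : Fin m → M) (hP : ∀ x : M, ∃ i : Fin m, dist x (p i) < γ)
    (θ : (ℤ → M) → M)
    (hθ : ∀ q : ℤ → M, (∀ n : ℤ, ∃ i : Fin m, q n = p i) →
      (∀ n : ℤ, dist (f (q n)) (q (n + 1)) < α) →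
      ∀ n : ℤ, dist ((f ^ n) (θ q)) (q n) ≤ β)
    (h2β : 2 * β < min ε (δ / 2)) (s : Fin m) :
    ∀ T : Set M,
      T = θ '' {q : ℤ → M | (∀ n : ℤ, ∃ i : Fin m, q n = p i) ∧
        (∀ n : ℤ, dist (f (q n)) (q (n + 1)) < α) ∧ q 0 = p s} →
      IsClosed T ∧ IsRectangle δ br T ∧ Metric.diam T ≤ 2 * β := by
  classical
  intro T hT
  have h2βε : 2 * β < ε := lt_of_lt_of_le h2β (min_le_left _ _)
  have h2βδ : 2 * β < δ := by
    have := lt_of_lt_of_le h2β (min_le_right _ _); linarith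
  -- continuity of iterates
  have hcont : ∀ n : ℤ, Continuous ⇑(f ^ n) := by
    intro n
    induction n using Int.induction_on with
    | zero => simp only [zpow_zero, Equiv.Perm.coe_one]; exact continuous_id
    | succ k ih => rw [zpow_add_one, Equiv.Perm.coe_mul]; exact ih.comp hf
    | pred k ih =>
        rw [zpow_sub_one, Equiv.Perm.coe_mul]
        have hinv : ⇑(f⁻¹) = ⇑f.symm := rfl
        rw [hinv]; exact ih.comp hf'
  -- every point of T is within β of p s
  have hmem : ∀ x ∈ T, dist x (p s) ≤ β := by
    intro x hx
    rw [hT] at hx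
    obtain ⟨q, ⟨hq1, hq2, hq3⟩, rfl⟩ := hx
    have h := hθ q hq1 hq2 0
    simpa [hq3] using h
  have hdiam : ∀ x ∈ T, ∀ y ∈ T, dist x y ≤ 2 * β := by
    intro x hx y hy
    calc dist x y ≤ dist x (p s) + dist (p s) y := dist_triangle _ _ _
      _ ≤ β + β := add_le_add (hmem x hx) (by rw [dist_comm]; exact hmem y hy)
      _ = 2 * β := by ring
  -- Nonemptiness: build a bi-infinite pseudo-orbit through p s
  have hne : T.Nonempty := by
    set F1 : Fin m → Fin m := fun i => Classical.choose (hP (f (p i))) with hF1def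
    have hF1 : ∀ i, dist (f (p i)) (p (F1 i)) < γ := fun i => Classical.choose_spec (hP (f (p i)))
    set F2 : Fin m → Fin m := fun i => Classical.choose (hP (f.symm (p i))) with hF2def
    have hF2 : ∀ i, dist (f.symm (p i)) (p (F2 i)) < γ :=
      fun i => Classical.choose_spec (hP (f.symm (p i)))
    set a : ℤ → Fin m := fun n => if 0 ≤ n then F1^[n.toNat] s else F2^[(-n).toNat] s with ha
    have ha_pos : ∀ k : ℕ, a (k : ℤ) = F1^[k] s := by
      intro k
      have h0 : (0:ℤ) ≤ (k:ℤ) := Int.natCast_nonneg k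
      simp [ha, h0, Int.toNat_natCast]
    have ha_neg : ∀ k : ℕ, a (-(k : ℤ)) = F2^[k] s := by
      intro k
      rcases Nat.eq_zero_or_pos k with h | h
      · subst h; simpa using ha_pos 0
      · have h1 : ¬ ((0:ℤ) ≤ -(k:ℤ)) := by omega
        simp [ha, h1, Int.toNat_natCast]
        exact fun h' => absurd h' (by omega)
    refine ⟨θ (fun n => p (a n)), ?_⟩
    rw [hT]
    refine ⟨fun n => p (a n), ⟨fun n => ⟨a n, rfl⟩, ?_, ?_⟩, rfl⟩
    · intro n
      show dist (f (p (a n))) (p (a (n+1))) < α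
      rcases le_or_gt 0 n with hn | hn
      · have hc : ((n.toNat : ℕ) : ℤ) = n := by omega
        have hc1 : ((n.toNat + 1 : ℕ) : ℤ) = n + 1 := by omega
        have e1 : a n = F1^[n.toNat] s := by rw [← hc]; exact ha_pos _
        have e2 : a (n+1) = F1^[n.toNat + 1] s := by rw [← hc1]; exact ha_pos _
        rw [e1, e2, Function.iterate_succ_apply']
        exact lt_trans (hF1 _) (by linarith)
      · set k := (-n).toNat with hkdef
        have hk1 : 1 ≤ k := by omega
        have hc : n = -((k : ℕ) : ℤ) := by omega
        have hc1 : n + 1 = -(((k-1 : ℕ) : ℕ) : ℤ) := by omega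
        have e1 : a n = F2^[k] s := by rw [hc]; exact ha_neg _
        have e2 : a (n+1) = F2^[k-1] s := by rw [hc1]; exact ha_neg _
        obtain ⟨j, hj⟩ : ∃ j, k = j + 1 := ⟨k - 1, by omega⟩
        have e2' : a (n+1) = F2^[j] s := by rw [e2, hj]; norm_num
        rw [e1, e2', hj, Function.iterate_succ_apply']
        have hstep := hγ _ _ (hF2 (F2^[j] s))
        rw [Equiv.apply_symm_apply] at hstep
        rw [dist_comm]
        linarith
    · show p (a 0) = p s
      have h0 : a 0 = s := by simpa using ha_pos 0
      rw [h0]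
  -- Closedness via compactness of the symbol space
  have hclosed : IsClosed T := by
    set Z : Set (M × (ℤ → Fin m)) :=
      {w : M × (ℤ → Fin m) | ∀ n : ℤ, dist ((f ^ n) w.1) (p (w.2 n)) ≤ β} ∩
      ({w : M × (ℤ → Fin m) | ∀ n : ℤ, dist (f (p (w.2 n))) (p (w.2 (n+1))) < α} ∩
       {w : M × (ℤ → Fin m) | p (w.2 0) = p s}) with hZdef
    have hZ : IsClosed Z := by
      have hA : IsClosed {w : M × (ℤ → Fin m) | ∀ n : ℤ, dist ((f ^ n) w.1) (p (w.2 n)) ≤ β} := by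
        have he : {w : M × (ℤ → Fin m) | ∀ n : ℤ, dist ((f ^ n) w.1) (p (w.2 n)) ≤ β}
            = ⋂ n : ℤ, {w : M × (ℤ → Fin m) | dist ((f ^ n) w.1) (p (w.2 n)) ≤ β} := by
          ext w; simp
        rw [he]
        refine isClosed_iInter fun n => isClosed_le ?_ continuous_const
        exact ((hcont n).comp continuous_fst).dist
          ((continuous_of_discreteTopology (f := p)).comp
            ((continuous_apply n).comp continuous_snd))
      have hB : IsClosed
          {w : M × (ℤ → Fin m) | ∀ n : ℤ, dist (f (p (w.2 n))) (p (w.2 (n+1))) < α} := by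
        have he : {w : M × (ℤ → Fin m) | ∀ n : ℤ, dist (f (p (w.2 n))) (p (w.2 (n+1))) < α}
            = ⋂ n : ℤ, (fun w : M × (ℤ → Fin m) => (w.2 n, w.2 (n+1))) ⁻¹'
                {ij : Fin m × Fin m | dist (f (p ij.1)) (p ij.2) < α} := by
          ext w; simp
        rw [he]
        refine isClosed_iInter fun n => (isClosed_discrete _).preimage ?_
        exact ((continuous_apply n).comp continuous_snd).prodMk
          ((continuous_apply (n+1)).comp continuous_snd)
      have hC : IsClosed {w : M × (ℤ → Fin m) | p (w.2 0) = p s} := by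
        have he : {w : M × (ℤ → Fin m) | p (w.2 0) = p s}
            = (fun w : M × (ℤ → Fin m) => w.2 0) ⁻¹' {i : Fin m | p i = p s} := rfl
        rw [he]
        exact (isClosed_discrete _).preimage ((continuous_apply 0).comp continuous_snd)
      exact hA.inter (hB.inter hC)
    have hZT : T = Prod.fst '' Z := by
      rw [hT]; ext x
      constructor
      · rintro ⟨q, ⟨hq1, hq2, hq3⟩, rfl⟩
        choose a haq using hq1
        refine ⟨(θ q, a), ⟨?_, ?_, ?_⟩, rfl⟩
        · intro n
          show dist ((f ^ n) (θ q)) (p (a n)) ≤ β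
          rw [← haq n]; exact hθ q (fun n => ⟨a n, haq n⟩) hq2 n
        · intro n
          show dist (f (p (a n))) (p (a (n+1))) < α
          rw [← haq n, ← haq (n+1)]; exact hq2 n
        · show p (a 0) = p s
          rw [← haq 0]; exact hq3
      · rintro ⟨⟨y, a⟩, ⟨h1, h2, h3⟩, rfl⟩
        refine ⟨fun n => p (a n), ⟨fun n => ⟨a n, rfl⟩, h2, h3⟩, ?_⟩
        have hsh := hθ (fun n => p (a n)) (fun n => ⟨a n, rfl⟩) h2
        refine hexp (θ fun n => p (a n)) y fun n => ?_
        calc dist ((f ^ n) (θ fun n => p (a n))) ((f ^ n) y)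
            ≤ dist ((f ^ n) (θ fun n => p (a n))) (p (a n)) + dist (p (a n)) ((f ^ n) y) :=
              dist_triangle _ _ _
          _ ≤ β + β := add_le_add (hsh n) (by rw [dist_comm]; exact h1 n)
          _ ≤ ρ := by linarith
    rw [hZT]
    exact ((hZ.isCompact).image continuous_fst).isClosed
  -- bracket closure
  have hbracket : ∀ x ∈ T, ∀ y ∈ T, br x y ∈ T := by
    intro x hx y hy
    rw [hT] at hx hy ⊢
    obtain ⟨q, ⟨hq1, hq2, hq3⟩, rfl⟩ := hx
    obtain ⟨q', ⟨hq1', hq2', hq3'⟩, rfl⟩ := hy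
    set r : ℤ → M := fun n => if 0 ≤ n then q n else q' n with hr
    have hrpos : ∀ n : ℤ, 0 ≤ n → r n = q n := fun n h => if_pos h
    have hrneg : ∀ n : ℤ, n < 0 → r n = q' n := fun n h => if_neg (not_le.mpr h)
    have hr1 : ∀ n : ℤ, ∃ i, r n = p i := by
      intro n
      by_cases h : 0 ≤ n
      · rw [hrpos n h]; exact hq1 n
      · rw [hrneg n (not_le.mp h)]; exact hq1' n
    have hr2 : ∀ n : ℤ, dist (f (r n)) (r (n+1)) < α := by
      intro n
      rcases le_or_gt 0 n with h | h
      · rw [hrpos n h, hrpos (n+1) (by omega)]; exact hq2 n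
      · rw [hrneg n h]
        rcases lt_or_eq_of_le (show n + 1 ≤ 0 by omega) with h1 | h1
        · rw [hrneg (n+1) h1]; exact hq2' n
        · have hre : r (n+1) = q' (n+1) := by
            rw [h1, hrpos 0 le_rfl, hq3, ← hq3']
          rw [hre]; exact hq2' n
    have hr3 : r 0 = p s := by rw [hrpos 0 le_rfl]; exact hq3
    have hz := hθ r hr1 hr2
    have hxps : dist (θ q) (p s) ≤ β := by
      have h := hθ q hq1 hq2 0; simpa [hq3] using h
    have hyps : dist (θ q') (p s) ≤ β := by
      have h := hθ q' hq1' hq2' 0; simpa [hq3'] using h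
    have hxy : dist (θ q) (θ q') < δ := by
      have htr := dist_triangle (θ q) (p s) (θ q')
      rw [dist_comm (p s)] at htr; linarith
    have hset := hbr (θ q) (θ q') hxy
    have hzmem : θ r ∈ epsStable f ε (θ q) ∩ epsUnstable f ε (θ q') := by
      constructor
      · intro n hn
        have h1 := hθ q hq1 hq2 n
        have h2 := hz n
        rw [hrpos n hn] at h2
        calc dist ((f ^ n) (θ q)) ((f ^ n) (θ r))
            ≤ dist ((f ^ n) (θ q)) (q n) + dist (q n) ((f ^ n) (θ r)) := dist_triangle _ _ _
          _ ≤ β + β := add_le_add h1 (by rw [dist_comm]; exact h2)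
          _ ≤ ε := by linarith
      · intro n hn
        have h1 := hθ q' hq1' hq2' n
        have h2 := hz n
        have hre : r n = q' n := by
          rcases lt_or_eq_of_le hn with h | h
          · exact hrneg n h
          · rw [h, hrpos 0 le_rfl, hq3, ← hq3']
        rw [hre] at h2
        calc dist ((f ^ n) (θ q')) ((f ^ n) (θ r))
            ≤ dist ((f ^ n) (θ q')) (q' n) + dist (q' n) ((f ^ n) (θ r)) := dist_triangle _ _ _
          _ ≤ β + β := add_le_add h1 (by rw [dist_comm]; exact h2)
          _ ≤ ε := by linarith
    rw [hset, Set.mem_singleton_iff] at hzmem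
    rw [← hzmem]
    exact ⟨r, ⟨hr1, hr2, hr3⟩, rfl⟩
  have hdle : Metric.diam T ≤ 2 * β :=
    Metric.diam_le_of_forall_dist_le (by linarith) hdiam
  exact ⟨hclosed, ⟨hne, lt_of_le_of_lt hdle h2βδ, hbracket⟩, hdle⟩
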